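/- arXiv:0710.4521 — 2 statements merged into one kernel-verified Lean document; each statement's English description precedes it below -/
import Mathlib

section
/- Let χ be a bicharacter on ℤ^I with values in 𝕜∖{0}, p ∈ I and i ∈ I∖{p}. Then in 𝒰(χ): (a) for all m ∈ ℕ, E_p^m F_p − F_p E_p^m = [m]_{q_pp}·(q_pp^{1−m}K_p − L_p)·E_p^{m−1}; (b) for all m ∈ ℕ, E^+_{i,m}F_p − F_pE^+_{i,m} = [m]_{q_pp}·(q_pp^{m−1}q_{pi}q_{ip} − 1)·L_p·E^+_{i,m−1}; (c) for all m ∈ ℕ₀, E^+_{i,m}F_i − F_iE^+_{i,m} = q_{ip}^{−m}·(∏_{s=0}^{m−1}(1 − q_pp^s q_{pi}q_{ip}))·K_i·E_p^m − δ_{m,0}·L_i. -/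
/-- The quantum integer `[n]_q = 1 + q + ⋯ + q^{n-1}` for `n ∈ ℕ`. -/
def qNat {𝕜 : Type*} [Field 𝕜] (q : 𝕜) (n : ℕ) : 𝕜 :=
  ∑ i ∈ Finset.range n, q ^ i

/-- The quantum factorial `[n]_q! = [1]_q [2]_q ⋯ [n]_q`. -/
def qFact {𝕜 : Type*} [Field 𝕜] (q : 𝕜) (n : ℕ) : 𝕜 :=
  ∏ i ∈ Finset.range n, qNat q (i + 1)

variable {𝕜 : Type*} [Field 𝕜] {I : Type*} [Fintype I] [DecidableEq I]

/-- The standard basis vector `ε_i` of `ℤ^I`. -/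
def eps (i : I) : I → ℤ := Pi.single i 1

/-- `χ : ℤ^I × ℤ^I → 𝕜∖{0}` is a bicharacter. -/
def IsBichar (χ : (I → ℤ) → (I → ℤ) → 𝕜) : Prop :=
  (∀ a b c : I → ℤ, χ (a + b) c = χ a c * χ b c) ∧
  (∀ c a b : I → ℤ, χ c (a + b) = χ c a * χ c b) ∧
  (∀ a b : I → ℤ, χ a b ≠ 0)

/-- The generators `K_i, K_i⁻¹, L_i, L_i⁻¹, E_i, F_i` of `𝒰(χ)`. -/
inductive UGen (I : Type*) where
  | K (i : I)
  | Kinv (i : I)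
  | L (i : I)
  | Linv (i : I)
  | E (i : I)
  | F (i : I)

/-- The toral generators are `K_i, K_i⁻¹, L_i, L_i⁻¹`. -/
def UGen.IsToral {I : Type*} : UGen I → Prop
  | .K _ => True
  | .Kinv _ => True
  | .L _ => True
  | .Linv _ => True
  | _ => False

variable (𝕜) in
/-- The defining relations of the Drinfel'd double `𝒰(χ)`:
all `K_i^{±1}, L_j^{±1}` commute pairwise; `K_iK_i⁻¹ = 1 = L_iL_i⁻¹`;
`K_iE_j = q_{ij}E_jK_i`, `L_iE_j = q_{ji}⁻¹E_jL_i`, `K_iF_j = q_{ij}⁻¹F_jK_i`,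
`L_iF_j = q_{ji}F_jL_i`; `E_iF_j − F_jE_i = δ_{ij}(K_i − L_i)`. -/
inductive URel (χ : (I → ℤ) → (I → ℤ) → 𝕜) :
    FreeAlgebra 𝕜 (UGen I) → FreeAlgebra 𝕜 (UGen I) → Prop
  | comm (x y : UGen I) (hx : x.IsToral) (hy : y.IsToral) :
      URel χ (FreeAlgebra.ι 𝕜 x * FreeAlgebra.ι 𝕜 y)
        (FreeAlgebra.ι 𝕜 y * FreeAlgebra.ι 𝕜 x)
  | KKinv (i : I) :
      URel χ (FreeAlgebra.ι 𝕜 (.K i) * FreeAlgebra.ι 𝕜 (.Kinv i)) 1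
  | LLinv (i : I) :
      URel χ (FreeAlgebra.ι 𝕜 (.L i) * FreeAlgebra.ι 𝕜 (.Linv i)) 1
  | KE (i j : I) :
      URel χ (FreeAlgebra.ι 𝕜 (.K i) * FreeAlgebra.ι 𝕜 (.E j))
        (χ (eps i) (eps j) • (FreeAlgebra.ι 𝕜 (.E j) * FreeAlgebra.ι 𝕜 (.K i)))
  | LE (i j : I) :
      URel χ (FreeAlgebra.ι 𝕜 (.L i) * FreeAlgebra.ι 𝕜 (.E j))
        ((χ (eps j) (eps i))⁻¹ • (FreeAlgebra.ι 𝕜 (.E j) * FreeAlgebra.ι 𝕜 (.L i)))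
  | KF (i j : I) :
      URel χ (FreeAlgebra.ι 𝕜 (.K i) * FreeAlgebra.ι 𝕜 (.F j))
        ((χ (eps i) (eps j))⁻¹ • (FreeAlgebra.ι 𝕜 (.F j) * FreeAlgebra.ι 𝕜 (.K i)))
  | LF (i j : I) :
      URel χ (FreeAlgebra.ι 𝕜 (.L i) * FreeAlgebra.ι 𝕜 (.F j))
        (χ (eps j) (eps i) • (FreeAlgebra.ι 𝕜 (.F j) * FreeAlgebra.ι 𝕜 (.L i)))
  | EF (i j : I) :
      URel χ (FreeAlgebra.ι 𝕜 (.E i) * FreeAlgebra.ι 𝕜 (.F j) -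
          FreeAlgebra.ι 𝕜 (.F j) * FreeAlgebra.ι 𝕜 (.E i))
        (if i = j then FreeAlgebra.ι 𝕜 (.K i) - FreeAlgebra.ι 𝕜 (.L i) else 0)

/-- The Drinfel'd double `𝒰(χ)`, presented by generators and relations. -/
abbrev UAlg (χ : (I → ℤ) → (I → ℤ) → 𝕜) : Type _ := RingQuot (URel 𝕜 χ)

variable (χ : (I → ℤ) → (I → ℤ) → 𝕜)

/-- The canonical projection from the free algebra onto `𝒰(χ)`. -/
noncomputable def mkU : FreeAlgebra 𝕜 (UGen I) →ₐ[𝕜] UAlg χ :=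
  RingQuot.mkAlgHom 𝕜 (URel 𝕜 χ)

/-- The generator `K_i` of `𝒰(χ)`. -/
noncomputable def uK (i : I) : UAlg χ := mkU χ (FreeAlgebra.ι 𝕜 (.K i))
/-- The generator `K_i⁻¹` of `𝒰(χ)`. -/
noncomputable def uKinv (i : I) : UAlg χ := mkU χ (FreeAlgebra.ι 𝕜 (.Kinv i))
/-- The generator `L_i` of `𝒰(χ)`. -/
noncomputable def uL (i : I) : UAlg χ := mkU χ (FreeAlgebra.ι 𝕜 (.L i))
/-- The generator `L_i⁻¹` of `𝒰(χ)`. -/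
noncomputable def uLinv (i : I) : UAlg χ := mkU χ (FreeAlgebra.ι 𝕜 (.Linv i))
/-- The generator `E_i` of `𝒰(χ)`. -/
noncomputable def uE (i : I) : UAlg χ := mkU χ (FreeAlgebra.ι 𝕜 (.E i))
/-- The generator `F_i` of `𝒰(χ)`. -/
noncomputable def uF (i : I) : UAlg χ := mkU χ (FreeAlgebra.ι 𝕜 (.F i))

/-- The general recursion `Y_0 = Y`, `Y_{m+1} = X Y_m − α β^m Y_m X`; with
`X = E_p`, `Y = E_i`, `α = q_{pi}`, `β = q_{pp}` this gives `E^+_{i,m}`. -/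
def recE {A : Type*} [Ring A] [Algebra 𝕜 A] (α β : 𝕜) (X Y : A) : ℕ → A
  | 0 => Y
  | m + 1 => X * recE α β X Y m - (α * β ^ m) • (recE α β X Y m * X)


section MyAux

variable {𝕜 : Type*} [Field 𝕜] {A : Type*} [Ring A] [Algebra 𝕜 A]

lemma my_inv_smul_of_eq {x y : A} {c : 𝕜} (hc : c ≠ 0) (h : x = c • y) : y = c⁻¹ • x := by
  rw [h, smul_smul, inv_mul_cancel₀ hc, one_smul]

lemma my_qNat_succ (q : 𝕜) (n : ℕ) : qNat q (n + 1) = q * qNat q n + 1 :=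
  geom_sum_succ

lemma my_expand_comm (E R F : A) (e : 𝕜) :
    (E * R - e • (R * E)) * F - F * (E * R - e • (R * E)) =
      E * (R * F - F * R) + (E * F - F * E) * R -
        e • ((R * F - F * R) * E + R * (E * F - F * E)) := by
  simp only [mul_sub, sub_mul, smul_sub, smul_add, smul_mul_assoc, mul_smul_comm, mul_assoc]
  abel

lemma my_expand_pow_comm (E F : A) (m : ℕ) :
    E ^ (m + 1) * F - F * E ^ (m + 1) =
      E * (E ^ m * F - F * E ^ m) + (E * F - F * E) * E ^ m := by
  rw [pow_succ' E m]
  simp only [mul_sub, sub_mul, mul_assoc]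
  abel

lemma my_comm_recE (α β c d : 𝕜) (T X Y : A) (hX : T * X = c • (X * T))
    (hY : T * Y = d • (Y * T)) :
    ∀ m, T * recE α β X Y m = (c ^ m * d) • (recE α β X Y m * T) := by
  intro m
  induction m with
  | zero => simpa [recE] using hY
  | succ m ih =>
    set R := recE α β X Y m with hR
    have h1 : T * (X * R) = (c ^ (m + 1) * d) • (X * R * T) := by
      calc T * (X * R) = (T * X) * R := (mul_assoc _ _ _).symm
        _ = c • (X * (T * R)) := by rw [hX, smul_mul_assoc, mul_assoc]
        _ = c • ((c ^ m * d) • (X * (R * T))) := by rw [ih, mul_smul_comm]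
        _ = (c ^ (m + 1) * d) • (X * R * T) := by
            rw [smul_smul, mul_assoc X R T]; congr 1; ring
    have h2 : T * (R * X) = (c ^ (m + 1) * d) • (R * X * T) := by
      calc T * (R * X) = (T * R) * X := (mul_assoc _ _ _).symm
        _ = (c ^ m * d) • (R * (T * X)) := by rw [ih, smul_mul_assoc, mul_assoc]
        _ = (c ^ m * d) • (c • (R * (X * T))) := by rw [hX, mul_smul_comm]
        _ = (c ^ (m + 1) * d) • (R * X * T) := by
            rw [smul_smul, mul_assoc R X T]; congr 1; ring
    show T * (X * R - (α * β ^ m) • (R * X)) =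
      (c ^ (m + 1) * d) • ((X * R - (α * β ^ m) • (R * X)) * T)
    rw [mul_sub, mul_smul_comm, h1, h2, sub_mul, smul_mul_assoc, smul_sub]
    rw [smul_smul, smul_smul]
    congr 1
    ring

end MyAux

set_option maxHeartbeats 1600000

/-- Corollary (co:rootvrel), parts for `F_p` and `F_i`: commutators of
`E_p^m` and `E^+_{i,m}` with `F_p`, `F_i` in `𝒰(χ)`. -/
theorem commutators_rootvrel (hχ : IsBichar χ) (p i : I) (hip : i ≠ p) :
    (∀ m : ℕ, 1 ≤ m →
      uE χ p ^ m * uF χ p - uF χ p * uE χ p ^ m =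
        qNat (χ (eps p) (eps p)) m •
          ((χ (eps p) (eps p) ^ ((1 : ℤ) - (m : ℤ)) • uK χ p - uL χ p) *
            uE χ p ^ (m - 1))) ∧
    (∀ m : ℕ, 1 ≤ m →
      recE (χ (eps p) (eps i)) (χ (eps p) (eps p)) (uE χ p) (uE χ i) m * uF χ p -
          uF χ p * recE (χ (eps p) (eps i)) (χ (eps p) (eps p)) (uE χ p) (uE χ i) m =
        (qNat (χ (eps p) (eps p)) m *
            (χ (eps p) (eps p) ^ (m - 1) * χ (eps p) (eps i) * χ (eps i) (eps p) - 1)) •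
          (uL χ p *
            recE (χ (eps p) (eps i)) (χ (eps p) (eps p)) (uE χ p) (uE χ i) (m - 1))) ∧
    (∀ m : ℕ,
      recE (χ (eps p) (eps i)) (χ (eps p) (eps p)) (uE χ p) (uE χ i) m * uF χ i -
          uF χ i * recE (χ (eps p) (eps i)) (χ (eps p) (eps p)) (uE χ p) (uE χ i) m =
        (χ (eps i) (eps p) ^ (-(m : ℤ)) *
            ∏ s ∈ Finset.range m,
              (1 - χ (eps p) (eps p) ^ s * χ (eps p) (eps i) * χ (eps i) (eps p))) •
          (uK χ i * uE χ p ^ m) -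
        (if m = 0 then uL χ i else 0)) := by
  obtain ⟨-, -, hne⟩ := hχ
  have hrel : ∀ {x y}, URel 𝕜 χ x y → mkU χ x = mkU χ y :=
    fun h => RingQuot.mkAlgHom_rel _ h
  set q := χ (eps p) (eps p) with hqd
  set α := χ (eps p) (eps i) with hαd
  set γ := χ (eps i) (eps p) with hγd
  have hq0 : q ≠ 0 := hne _ _
  have hα0 : α ≠ 0 := hne _ _
  have hγ0 : γ ≠ 0 := hne _ _
  set E := uE χ p with hEd
  set Ei := uE χ i with hEid
  set F := uF χ p with hFd
  set Fi := uF χ i with hFid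
  set K := uK χ p with hKd
  set L := uL χ p with hLd
  set Ki := uK χ i with hKid
  set Li := uL χ i with hLid
  set Y := recE α q E Ei with hYd
  have hrec : ∀ m, Y (m + 1) = E * Y m - (α * q ^ m) • (Y m * E) := fun m => rfl
  have hY0 : Y 0 = Ei := rfl
  -- basic relations
  have hKE : K * E = q • (E * K) := by
    have h := hrel (URel.KE p p); simp only [map_mul, map_smul] at h; exact h
  have hLE : L * E = q⁻¹ • (E * L) := by
    have h := hrel (URel.LE p p); simp only [map_mul, map_smul] at h; exact h
  have hKEi : K * Ei = α • (Ei * K) := by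
    have h := hrel (URel.KE p i); simp only [map_mul, map_smul] at h; exact h
  have hLEi : L * Ei = γ⁻¹ • (Ei * L) := by
    have h := hrel (URel.LE p i); simp only [map_mul, map_smul] at h; exact h
  have hKiE : Ki * E = γ • (E * Ki) := by
    have h := hrel (URel.KE i p); simp only [map_mul, map_smul] at h; exact h
  have hLiE : Li * E = α⁻¹ • (E * Li) := by
    have h := hrel (URel.LE i p); simp only [map_mul, map_smul] at h; exact h
  have hEF : E * F - F * E = K - L := by
    have h := hrel (URel.EF p p)
    simp only [map_mul, map_sub, if_pos, if_true, eq_self_iff_true] at h; exact h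
  have hEiF : Ei * F - F * Ei = 0 := by
    have h := hrel (URel.EF i p)
    rw [if_neg hip] at h
    simp only [map_mul, map_sub, map_zero] at h; exact h
  have hEFi : E * Fi - Fi * E = 0 := by
    have h := hrel (URel.EF p i)
    have hpi : ¬ p = i := fun h' => hip h'.symm
    rw [if_neg hpi] at h
    simp only [map_mul, map_sub, map_zero] at h; exact h
  have hEiFi : Ei * Fi - Fi * Ei = Ki - Li := by
    have h := hrel (URel.EF i i)
    simp only [map_mul, map_sub, if_pos, if_true, eq_self_iff_true] at h; exact h
  -- inverted relations
  have hEK : E * K = q⁻¹ • (K * E) := my_inv_smul_of_eq (A := UAlg χ) hq0 hKE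
  have hEL : E * L = q • (L * E) := by
    simpa using my_inv_smul_of_eq (A := UAlg χ) (inv_ne_zero hq0) hLE
  have hEiK : Ei * K = α⁻¹ • (K * Ei) := my_inv_smul_of_eq (A := UAlg χ) hα0 hKEi
  have hEiL : Ei * L = γ • (L * Ei) := by
    simpa using my_inv_smul_of_eq (A := UAlg χ) (inv_ne_zero hγ0) hLEi
  have hEKi : E * Ki = γ⁻¹ • (Ki * E) := my_inv_smul_of_eq (A := UAlg χ) hγ0 hKiE
  have hELi : E * Li = α • (Li * E) := by
    simpa using my_inv_smul_of_eq (A := UAlg χ) (inv_ne_zero hα0) hLiE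
  -- commutation with recE
  have hKY : ∀ m, K * Y m = (q ^ m * α) • (Y m * K) :=
    my_comm_recE α q q α K E Ei hKE hKEi
  have hLY : ∀ m, L * Y m = ((q⁻¹) ^ m * γ⁻¹) • (Y m * L) :=
    my_comm_recE α q q⁻¹ γ⁻¹ L E Ei hLE hLEi
  have hYK : ∀ m, Y m * K = (q ^ m * α)⁻¹ • (K * Y m) := fun m =>
    my_inv_smul_of_eq (A := UAlg χ) (mul_ne_zero (pow_ne_zero _ hq0) hα0) (hKY m)
  have hYL : ∀ m, Y m * L = ((q⁻¹) ^ m * γ⁻¹)⁻¹ • (L * Y m) := fun m =>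
    my_inv_smul_of_eq (A := UAlg χ) (mul_ne_zero (pow_ne_zero _ (inv_ne_zero hq0)) (inv_ne_zero hγ0)) (hLY m)
  -- push E past K·E^m etc.
  have hEKE : ∀ m : ℕ, E * (K * E ^ m) = q⁻¹ • (K * E ^ (m + 1)) := by
    intro m; rw [← mul_assoc, hEK, smul_mul_assoc, mul_assoc, ← pow_succ']
  have hELE : ∀ m : ℕ, E * (L * E ^ m) = q • (L * E ^ (m + 1)) := by
    intro m; rw [← mul_assoc, hEL, smul_mul_assoc, mul_assoc, ← pow_succ']
  have hEKiE : ∀ m : ℕ, E * (Ki * E ^ m) = γ⁻¹ • (Ki * E ^ (m + 1)) := by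
    intro m; rw [← mul_assoc, hEKi, smul_mul_assoc, mul_assoc, ← pow_succ']
  have hELY : ∀ m, E * (L * Y m) = q • (L * (E * Y m)) := by
    intro m; rw [← mul_assoc, hEL, smul_mul_assoc, mul_assoc]
  have hgeom : ∀ n : ℕ, q * qNat q n + 1 = qNat q n + q ^ n := by
    intro n
    have h1 : qNat q (n + 1) = q ^ n + qNat q n := geom_sum_succ'
    rw [← my_qNat_succ, h1]; ring
  -- Part (a)
  have partA : ∀ m : ℕ, E ^ (m + 1) * F - F * E ^ (m + 1) =
      qNat q (m + 1) • (((q ^ m)⁻¹ • K - L) * E ^ m) := by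
    intro m
    induction m with
    | zero => simpa [qNat] using hEF
    | succ m ih =>
      rw [my_expand_pow_comm, ih, hEF, my_qNat_succ q (m + 1)]
      simp only [mul_smul_comm, sub_mul, smul_mul_assoc, mul_sub, smul_sub]
      rw [hEKE, hELE]
      match_scalars <;> (try field_simp) <;> (try ring) <;>
        (try linear_combination (-(q * q ^ m)) * hgeom (1 + m))
  -- Part (b)
  have partB : ∀ m : ℕ, Y (m + 1) * F - F * Y (m + 1) =
      (qNat q (m + 1) * (q ^ m * α * γ - 1)) • (L * Y m) := by
    intro m
    induction m with
    | zero =>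
      rw [hrec 0, my_expand_comm, hY0, hEiF, hEF]
      simp only [mul_zero, zero_mul, zero_add, add_zero, pow_zero, mul_one, one_mul]
      rw [show qNat q 1 = 1 by simp [qNat]]
      simp only [mul_sub, sub_mul, smul_sub]
      rw [hEiK, hEiL]
      match_scalars <;> field_simp <;> ring
    | succ m ih =>
      rw [hrec (m + 1), my_expand_comm, ih, hEF, my_qNat_succ q (m + 1)]
      simp only [sub_mul, mul_sub]
      rw [hYK (m + 1), hYL (m + 1), hrec m]
      simp only [mul_sub, sub_mul, smul_sub, sub_smul, mul_smul_comm, smul_mul_assoc,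
        mul_assoc, smul_smul, smul_add, mul_add, add_mul]
      rw [hELY m]
      match_scalars <;> (try simp only [inv_pow, mul_inv, inv_inv]) <;> (try field_simp) <;> (try ring) <;>
        (try linear_combination (-(α * γ * q * q ^ m)) * hgeom (1 + m)) <;>
        (try linear_combination (α * γ * q * q ^ (m * 2)) * hgeom (1 + m))
  -- Part (c)
  have partC1 : ∀ m : ℕ, Y (m + 1) * Fi - Fi * Y (m + 1) =
      ((γ⁻¹) ^ (m + 1) * ∏ s ∈ Finset.range (m + 1), (1 - q ^ s * α * γ)) •
        (Ki * E ^ (m + 1)) := by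
    intro m
    induction m with
    | zero =>
      rw [hrec 0, my_expand_comm, hY0, hEiFi, hEFi]
      simp only [mul_zero, zero_mul, zero_add, add_zero, pow_zero, mul_one, pow_one,
        Finset.prod_range_one]
      simp only [mul_sub, sub_mul, smul_sub]
      rw [hEKi, hELi]
      match_scalars <;> field_simp <;> ring
    | succ m ih =>
      rw [hrec (m + 1), my_expand_comm, ih, hEFi, Finset.prod_range_succ _ (m + 1)]
      simp only [mul_zero, zero_mul, zero_add, add_zero, mul_smul_comm, smul_mul_assoc,
        mul_assoc, smul_smul]
      rw [hEKiE (m + 1), ← pow_succ E (m + 1)]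
      match_scalars
      linear_combination (α * q ^ (m + 1) * (γ⁻¹ ^ (m + 1) * ∏ x ∈ Finset.range (m + 1), (1 - q ^ x * (α * γ)))) * mul_inv_cancel₀ hγ0
  refine ⟨?_, ?_, ?_⟩
  · intro m hm
    obtain ⟨k, rfl⟩ : ∃ k, m = k + 1 := ⟨m - 1, (Nat.succ_pred_eq_of_pos hm).symm⟩
    have hz : ((1 : ℤ) - ((k + 1 : ℕ) : ℤ)) = -(k : ℤ) := by push_cast; ring
    rw [hz, zpow_neg, zpow_natCast, Nat.add_sub_cancel]
    exact partA k
  · intro m hm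
    obtain ⟨k, rfl⟩ : ∃ k, m = k + 1 := ⟨m - 1, (Nat.succ_pred_eq_of_pos hm).symm⟩
    rw [Nat.add_sub_cancel]
    exact partB k
  · intro m
    cases m with
    | zero =>
      rw [if_pos rfl]
      simp only [Nat.cast_zero, neg_zero, zpow_zero, Finset.range_zero, Finset.prod_empty,
        mul_one, one_mul, pow_zero]
      rw [one_smul]
      exact hEiFi
    | succ k =>
      rw [if_neg (Nat.succ_ne_zero k), sub_zero, zpow_neg, zpow_natCast, ← inv_pow]
      exact partC1 k
end

section
/- Let χ be a bicharacter on ℤ^I with values in 𝕜∖{0}, p ∈ I and i ∈ I∖{p}. Then in 𝒰(χ), for all m, n ∈ ℕ₀ with m ≥ n: E^+_{i,m}F^+_{i,n} − F^+_{i,n}E^+_{i,m} = (−1)^n q_{ip}^{n−m} q_{pp}^{n(n−m)} · (∏_{s=0}^{n−1}[m−s]_{q_pp}) · (∏_{s=0}^{m−1}(1 − q_pp^s q_{pi}q_{ip})) · (K_p^n K_i − δ_{m,n} L_p^n L_i) · E_p^{m−n}. -/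
variable {𝕜 : Type*} [Field 𝕜] {I : Type*} [Fintype I] [DecidableEq I]

variable (χ : (I → ℤ) → (I → ℤ) → 𝕜)

set_option linter.unusedSectionVars false

section ScalarHelpers
variable {𝕜 : Type*} [Field 𝕜]

lemma qNat_one (q : 𝕜) : qNat q 1 = 1 := by simp [qNat]

lemma qNat_succ (q : 𝕜) (n : ℕ) : qNat q (n + 1) = qNat q n + q ^ n :=
  Finset.sum_range_succ _ _

lemma qNat_succ' (q : 𝕜) (n : ℕ) : qNat q (n + 1) = 1 + q * qNat q n := by
  rw [qNat, Finset.sum_range_succ', qNat, Finset.mul_sum]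
  simp only [pow_zero, pow_succ']
  ring

lemma qNat_inv (q : 𝕜) (hq : q ≠ 0) : ∀ n, qNat q⁻¹ (n + 1) = (q ^ n)⁻¹ * qNat q (n + 1)
  | 0 => by simp [qNat]
  | (n+1) => by
      rw [qNat_succ, qNat_inv q hq n, qNat_succ' q (n+1)]
      simp only [inv_pow]
      field_simp
      ring

lemma prod_qNat (q : 𝕜) (k : ℕ) : ∀ n,
    qNat q (k + 1) * ∏ s ∈ Finset.range n, qNat q (n + k + 1 - s) =
    qNat q (n + k + 1) * ∏ s ∈ Finset.range n, qNat q (n + k - s)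
  | 0 => by simp
  | (n+1) => by
      have h1 : ∏ s ∈ Finset.range (n+1), qNat q (n + 1 + k + 1 - s)
          = (∏ s ∈ Finset.range n, qNat q (n + k + 1 - s)) * qNat q (n + k + 2) := by
        rw [Finset.prod_range_succ']
        congr 1
        · exact Finset.prod_congr rfl fun s hs => by congr 1; omega
        · congr 1; omega
      have h2 : ∏ s ∈ Finset.range (n+1), qNat q (n + 1 + k - s)
          = (∏ s ∈ Finset.range n, qNat q (n + k - s)) * qNat q (n + k + 1) := by
        rw [Finset.prod_range_succ']
        congr 1
        · exact Finset.prod_congr rfl fun s hs => by congr 1; omega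
        · congr 1; omega
      rw [h1, h2, show n+1+k+1 = n+k+2 by omega, ← mul_assoc, prod_qNat q k n]
      ring

end ScalarHelpers

section AlgHelpers
variable {A : Type*} [Ring A] [Algebra 𝕜 A]

lemma comm_swap {x y : A} {c : 𝕜} (hc : c ≠ 0) (h : x * y = c • (y * x)) :
    y * x = c⁻¹ • (x * y) := by
  rw [h, smul_smul, inv_mul_cancel₀ hc, one_smul]

lemma comm_ctx {x y : A} {c : 𝕜} (h : x * y = c • (y * x)) (z : A) :
    x * (y * z) = c • (y * (x * z)) := by
  rw [← mul_assoc, h, smul_mul_assoc, mul_assoc]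

lemma comm_ctx_eq {x y : A} (h : x * y = y * x) (z : A) :
    x * (y * z) = y * (x * z) := by
  rw [← mul_assoc, h, mul_assoc]

lemma pow_mul_ctx (x z : A) (n : ℕ) : x ^ n * (x * z) = x ^ (n + 1) * z := by
  rw [← mul_assoc, ← pow_succ]

lemma comm_pow {x y : A} {c : 𝕜} (h : x * y = c • (y * x)) :
    ∀ n, x * y ^ n = c ^ n • (y ^ n * x)
  | 0 => by simp
  | (n+1) => by
      rw [pow_succ, comm_ctx (comm_pow h n), h, mul_smul_comm, smul_smul, pow_mul_ctx,
        ← pow_succ]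
      simp [pow_succ, mul_assoc]

lemma comm_recE {α β γ δ : 𝕜} {K X Y : A} (hX : K * X = γ • (X * K)) (hY : K * Y = δ • (Y * K)) :
    ∀ m, K * recE α β X Y m = (δ * γ ^ m) • (recE α β X Y m * K)
  | 0 => by simpa [recE] using hY
  | (m+1) => by
      have ih := comm_recE (α := α) (β := β) hX hY m
      rw [show recE α β X Y (m+1) = X * recE α β X Y m - (α * β ^ m) • (recE α β X Y m * X) from rfl]
      rw [mul_sub, comm_ctx hX, ih]
      simp only [mul_smul_comm, smul_smul]
      rw [comm_ctx ih, hX]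
      simp only [mul_smul_comm, smul_smul, smul_sub, sub_mul, smul_mul_assoc, mul_assoc]
      match_scalars <;> ring

end AlgHelpers

section Steps
variable {A : Type*} [Ring A] [Algebra 𝕜 A]

lemma base_step {q a b Λ0 Λ' δ0 : 𝕜} {Ki Li E Fi R : A} {m : ℕ}
    (hC : R * Fi - Fi * R = Λ0 • (Ki * E ^ m) - (Λ0 * δ0) • (Li * E ^ m))
    (hEKi : E * Ki = b⁻¹ • (Ki * E)) (hELi : E * Li = a • (Li * E))
    (hEFi : E * Fi = Fi * E)
    (hs1 : Λ' = Λ0 * (b⁻¹ - a * q ^ m))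
    (hs2 : Λ0 * δ0 * (a - a * q ^ m) = 0) :
    (E * R - (a * q ^ m) • (R * E)) * Fi - Fi * (E * R - (a * q ^ m) • (R * E))
      = Λ' • (Ki * E ^ (m+1)) := by
  have expand : (E * R - (a * q ^ m) • (R * E)) * Fi - Fi * (E * R - (a * q ^ m) • (R * E))
      = E * (R * Fi - Fi * R) - (a * q ^ m) • ((R * Fi - Fi * R) * E) := by
    simp only [sub_mul, mul_sub, smul_mul_assoc, mul_smul_comm, smul_sub, mul_assoc]
    rw [hEFi, comm_ctx_eq hEFi.symm]
    module
  rw [expand, hC]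
  simp only [smul_sub, mul_sub, sub_mul, smul_smul, mul_smul_comm, smul_mul_assoc, mul_assoc]
  rw [comm_ctx hEKi, comm_ctx hELi]
  simp only [mul_smul_comm, smul_smul, pow_mul_ctx, ← pow_succ, ← pow_succ']
  match_scalars
  · linear_combination -hs1
  · linear_combination -hs2
lemma succ_step {b c u v w Nk Λ0 Λ1 Λ' δ1 δ' : 𝕜} {K Ki L Li E F Rm Rm' Sn : A} {n k : ℕ}
    (hvw : w * v = 1)
    (hC : Rm * Sn - Sn * Rm = Λ0 • (K ^ n * (Ki * E ^ (k+1))))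
    (hC' : Rm' * Sn - Sn * Rm' = Λ1 • (K ^ n * (Ki * E ^ k)) - (Λ1 * δ1) • (L ^ n * (Li * E ^ k)))
    (hA : Rm * F - F * Rm = c • (Rm' * L))
    (hFKn : F * K ^ n = u • (K ^ n * F)) (hFKi : F * Ki = b • (Ki * F))
    (hEkK : E ^ k * K = w • (K * E ^ k)) (hEkL : E ^ k * L = v • (L * E ^ k))
    (hLS : L * Sn = (b * u) • (Sn * L))
    (hKiK : Ki * K = K * Ki) (hKiL : Ki * L = L * Ki) (hLiL : Li * L = L * Li)
    (hD : E ^ (k+1) * F - F * E ^ (k+1) = Nk • (E ^ k * K) - (Nk * w) • (E ^ k * L))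
    (hs1 : Λ' = -(Λ0 * b * u * Nk * w))
    (hs2 : Λ0 * u * b * Nk + c * b * u * Λ1 * v = 0)
    (hs3 : Λ' * δ' = c * b * u * (Λ1 * δ1) * v) :
    Rm * (F * Sn - (b * u) • (Sn * F)) - (F * Sn - (b * u) • (Sn * F)) * Rm
      = Λ' • (K ^ (n+1) * (Ki * E ^ k)) - (Λ' * δ') • (L ^ (n+1) * (Li * E ^ k)) := by
  have hFE : F * E ^ (k+1) = E ^ (k+1) * F - Nk • (E ^ k * K)
      + (Nk * w) • (E ^ k * L) := by
    have h : F * E ^ (k+1) = E ^ (k+1) * F - (E ^ (k+1) * F - F * E ^ (k+1)) := by abel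
    rw [h, hD]; abel
  have expand : Rm * (F * Sn - (b * u) • (Sn * F)) - (F * Sn - (b * u) • (Sn * F)) * Rm
      = F * (Rm * Sn - Sn * Rm) + (Rm * F - F * Rm) * Sn
        - (b * u) • (Sn * (Rm * F - F * Rm) + (Rm * Sn - Sn * Rm) * F) := by
    simp only [mul_sub, sub_mul, mul_add, add_mul, smul_sub, smul_add, mul_smul_comm,
      smul_mul_assoc, mul_assoc]
    module
  have hT1 : F * (K ^ n * (Ki * E ^ (k+1)))
      = (u * b) • (K ^ n * (Ki * (E ^ (k+1) * F)))
        - (u * b * Nk * w) • (K ^ (n+1) * (Ki * E ^ k))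
        + (u * b * Nk) • (K ^ n * (L * (Ki * E ^ k))) := by
    rw [comm_ctx hFKn, comm_ctx hFKi, hFE]
    simp only [mul_sub, mul_add, smul_sub, smul_add, mul_smul_comm, smul_smul]
    rw [hEkK, hEkL]
    simp only [mul_smul_comm, smul_smul]
    rw [comm_ctx_eq hKiK, comm_ctx_eq hKiL, pow_mul_ctx]
    match_scalars
    all_goals try ring
    all_goals linear_combination (u * b * Nk) * hvw
  have hCL : Sn * (Rm' * L) = Rm' * (Sn * L)
      - ((Λ1 * v) • (K ^ n * (L * (Ki * E ^ k)))
          - (Λ1 * δ1 * v) • (L ^ (n+1) * (Li * E ^ k))) := by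
    have h := congrArg (· * L) hC'
    simp only [sub_mul, smul_mul_assoc, mul_assoc] at h
    rw [hEkL] at h
    simp only [mul_smul_comm, smul_smul] at h
    rw [comm_ctx_eq hKiL, comm_ctx_eq hLiL, pow_mul_ctx] at h
    rw [← h]; abel
  rw [expand, hC, hA]
  simp only [smul_mul_assoc, mul_smul_comm, smul_add, smul_sub, smul_smul, mul_assoc]
  rw [hT1, hLS, hCL]
  simp only [mul_smul_comm, smul_add, smul_sub, smul_smul, mul_assoc]
  match_scalars
  all_goals try ring
  · linear_combination -hs1
  · linear_combination hs2
  · linear_combination hs3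

lemma mul_pow_ctx (x z : A) (n : ℕ) : x * (x ^ n * z) = x ^ (n + 1) * z := by
  rw [← mul_assoc, ← pow_succ']

lemma lemD {q : 𝕜} {E F K L : A} (hq : q ≠ 0)
    (hEF : E * F - F * E = K - L)
    (hKE : K * E = q • (E * K)) (hLE : L * E = q⁻¹ • (E * L)) :
    ∀ k, E ^ (k+1) * F - F * E ^ (k+1)
      = qNat q (k+1) • (E ^ k * K) - (qNat q (k+1) * (q ^ k)⁻¹) • (E ^ k * L)
  | 0 => by
      simpa [qNat_one] using hEF
  | (k+1) => by
      have ih := lemD hq hEF hKE hLE k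
      have expand : E ^ (k+2) * F - F * E ^ (k+2)
          = E * (E ^ (k+1) * F - F * E ^ (k+1)) + (E * F - F * E) * E ^ (k+1) := by
        have h2 : E ^ (k+2) = E * E ^ (k+1) := by rw [← pow_succ']
        rw [h2]
        simp only [mul_sub, sub_mul, mul_assoc]
        module
      rw [expand, ih, hEF]
      simp only [mul_sub, sub_mul, smul_sub, mul_smul_comm, smul_smul,
        comm_pow hKE (k+1), comm_pow hLE (k+1), mul_pow_ctx]
      match_scalars
      · simp only [qNat_succ q (k+1)]; ring
      · rw [show ((k:ℕ)+1+1) = k+2 from rfl, qNat_succ' q (k+1)]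
        simp only [inv_pow]
        field_simp
        ring
  termination_by k => k

lemma lemA {α β lam : 𝕜} {X Y F K L : A} (hβ : β ≠ 0)
    (hXF : X * F - F * X = K - L) (hYF : Y * F = F * Y)
    (hKX : K * X = β • (X * K)) (hKY : K * Y = α • (Y * K))
    (hLX : L * X = β⁻¹ • (X * L)) (hLY : L * Y = lam • (Y * L)) :
    ∀ m, recE α β X Y (m+1) * F - F * recE α β X Y (m+1)
      = (α * qNat β (m+1) - lam * qNat β⁻¹ (m+1)) • (recE α β X Y m * L)
  | 0 => by
      have hrec : recE α β X Y 1 = X * Y - (α * β ^ 0) • (Y * X) := rfl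
      have hrec0 : recE α β X Y 0 = Y := rfl
      rw [hrec, hrec0]
      have expand : (X * Y - (α * β ^ 0) • (Y * X)) * F - F * (X * Y - (α * β ^ 0) • (Y * X))
          = (X * F - F * X) * Y - (α * β ^ 0) • (Y * (X * F - F * X)) := by
        simp only [sub_mul, mul_sub, smul_mul_assoc, mul_smul_comm, smul_sub, mul_assoc]
        rw [hYF, comm_ctx_eq hYF.symm]
        module
      rw [expand, hXF]
      simp only [sub_mul, mul_sub, smul_sub, pow_zero, mul_one, hKY, hLY]
      match_scalars <;> (simp [qNat_one]; try ring)
  | (m+1) => by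
      have ih := lemA hβ hXF hYF hKX hKY hLX hLY m
      have expand : recE α β X Y (m+2) * F - F * recE α β X Y (m+2)
          = X * (recE α β X Y (m+1) * F - F * recE α β X Y (m+1))
            + (X * F - F * X) * recE α β X Y (m+1)
            - (α * β ^ (m+1)) • ((recE α β X Y (m+1) * F - F * recE α β X Y (m+1)) * X
                + recE α β X Y (m+1) * (X * F - F * X)) := by
        rw [show recE α β X Y (m+2)
            = X * recE α β X Y (m+1) - (α * β ^ (m+1)) • (recE α β X Y (m+1) * X) from rfl]
        simp only [sub_mul, mul_sub, add_mul, mul_add, smul_mul_assoc, mul_smul_comm,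
          smul_sub, smul_add, mul_assoc]
        module
      have hKR := comm_recE (α := α) (β := β) hKX hKY (m+1)
      have hLR := comm_recE (α := α) (β := β) hLX hLY (m+1)
      rw [expand, ih, hXF]
      simp only [sub_mul, mul_sub, add_mul, mul_add, smul_sub, smul_add,
        smul_mul_assoc, mul_smul_comm, smul_smul, mul_assoc]
      rw [hKR, hLR, hLX]
      rw [show recE α β X Y (m+1)
          = X * recE α β X Y m - (α * β ^ m) • (recE α β X Y m * X) from rfl]
      simp only [sub_mul, mul_sub, add_mul, mul_add, smul_sub, smul_add,
        smul_mul_assoc, mul_smul_comm, smul_smul, mul_assoc]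
      rw [qNat_succ β (m+1), qNat_succ β⁻¹ (m+1)]
      match_scalars
      all_goals try ring
      linear_combination (lam * α * β ^ m * qNat β⁻¹ (1+m)
        - α ^ 2 * β ^ m * qNat β (1+m)) * (mul_inv_cancel₀ hβ)
  termination_by m => m


section Concrete
variable {𝕜 : Type*} [Field 𝕜] {I : Type*} [Fintype I] [DecidableEq I]
variable (χ : (I → ℤ) → (I → ℤ) → 𝕜)

lemma rel_KE (j l : I) : uK χ j * uE χ l = χ (eps j) (eps l) • (uE χ l * uK χ j) := by
  simpa only [uK, uE, mkU, map_mul, map_smul] using RingQuot.mkAlgHom_rel 𝕜 (URel.KE (χ := χ) j l)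

lemma rel_LE (j l : I) : uL χ j * uE χ l = (χ (eps l) (eps j))⁻¹ • (uE χ l * uL χ j) := by
  simpa only [uL, uE, mkU, map_mul, map_smul] using RingQuot.mkAlgHom_rel 𝕜 (URel.LE (χ := χ) j l)

lemma rel_KF (j l : I) : uK χ j * uF χ l = (χ (eps j) (eps l))⁻¹ • (uF χ l * uK χ j) := by
  simpa only [uK, uF, mkU, map_mul, map_smul] using RingQuot.mkAlgHom_rel 𝕜 (URel.KF (χ := χ) j l)

lemma rel_LF (j l : I) : uL χ j * uF χ l = χ (eps l) (eps j) • (uF χ l * uL χ j) := by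
  simpa only [uL, uF, mkU, map_mul, map_smul] using RingQuot.mkAlgHom_rel 𝕜 (URel.LF (χ := χ) j l)

lemma rel_EF (j l : I) : uE χ j * uF χ l - uF χ l * uE χ j
    = if j = l then uK χ j - uL χ j else 0 := by
  have h := RingQuot.mkAlgHom_rel 𝕜 (URel.EF (χ := χ) j l)
  by_cases hjl : j = l <;>
    simpa only [uE, uF, uK, uL, mkU, map_mul, map_sub, map_zero, hjl, if_true, if_false,
      if_pos, if_neg, ne_eq, not_false_iff] using h

lemma rel_toral (x y : UGen I) (hx : x.IsToral) (hy : y.IsToral) :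
    mkU χ (FreeAlgebra.ι 𝕜 x) * mkU χ (FreeAlgebra.ι 𝕜 y)
      = mkU χ (FreeAlgebra.ι 𝕜 y) * mkU χ (FreeAlgebra.ι 𝕜 x) := by
  simpa only [mkU, map_mul] using RingQuot.mkAlgHom_rel 𝕜 (URel.comm (χ := χ) x y hx hy)

lemma rel_KiK (j l : I) : uK χ j * uK χ l = uK χ l * uK χ j :=
  rel_toral χ (.K j) (.K l) trivial trivial

lemma rel_KiL (j l : I) : uK χ j * uL χ l = uL χ l * uK χ j :=
  rel_toral χ (.K j) (.L l) trivial trivial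

lemma rel_LiL (j l : I) : uL χ j * uL χ l = uL χ l * uL χ j :=
  rel_toral χ (.L j) (.L l) trivial trivial

variable {χ}

lemma rel_FK (hχ : IsBichar χ) (j l : I) :
    uF χ l * uK χ j = χ (eps j) (eps l) • (uK χ j * uF χ l) := by
  simpa using comm_swap (inv_ne_zero (hχ.2.2 _ _)) (rel_KF χ j l)

lemma rel_EK (hχ : IsBichar χ) (j l : I) :
    uE χ l * uK χ j = (χ (eps j) (eps l))⁻¹ • (uK χ j * uE χ l) :=
  comm_swap (hχ.2.2 _ _) (rel_KE χ j l)

lemma rel_EL (hχ : IsBichar χ) (j l : I) :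
    uE χ l * uL χ j = χ (eps l) (eps j) • (uL χ j * uE χ l) := by
  simpa using comm_swap (inv_ne_zero (hχ.2.2 _ _)) (rel_LE χ j l)

end Concrete

section Main
variable {𝕜 : Type*} [Field 𝕜] {I : Type*} [Fintype I] [DecidableEq I]
variable {χ : (I → ℤ) → (I → ℤ) → 𝕜}

set_option maxHeartbeats 1000000 in
lemma aux_commutator (hχ : IsBichar χ) (p i : I) (hip : i ≠ p) :
    ∀ n m, n ≤ m →
      recE (χ (eps p) (eps i)) (χ (eps p) (eps p)) (uE χ p) (uE χ i) (m) * recE (χ (eps i) (eps p)) (χ (eps p) (eps p)) (uF χ p) (uF χ i) (n) - recE (χ (eps i) (eps p)) (χ (eps p) (eps p)) (uF χ p) (uF χ i) (n) * recE (χ (eps p) (eps i)) (χ (eps p) (eps p)) (uE χ p) (uE χ i) (m) =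
      ((-1 : 𝕜) ^ n * ((χ (eps i) (eps p)) ^ (m - n))⁻¹ * ((χ (eps p) (eps p)) ^ (n * (m - n)))⁻¹ *
          (∏ s ∈ Finset.range n, qNat (χ (eps p) (eps p)) (m - s)) *
          ∏ s ∈ Finset.range m, (1 - (χ (eps p) (eps p)) ^ s * (χ (eps p) (eps i)) * (χ (eps i) (eps p)))) •
        ((uK χ p ^ n * uK χ i - if m = n then uL χ p ^ n * uL χ i else 0) * uE χ p ^ (m - n)) := by
  have hq : (χ (eps p) (eps p)) ≠ 0 := hχ.2.2 _ _
  have ha : (χ (eps p) (eps i)) ≠ 0 := hχ.2.2 _ _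
  have hb : (χ (eps i) (eps p)) ≠ 0 := hχ.2.2 _ _
  have hXF : uE χ p * uF χ p - uF χ p * uE χ p = uK χ p - uL χ p := by
    simpa using rel_EF χ p p
  have hYF : uE χ i * uF χ p = uF χ p * uE χ i := by
    have h := rel_EF χ i p
    rw [if_neg hip] at h
    exact sub_eq_zero.mp h
  intro n
  induction n with
  | zero =>
    intro m hm
    clear hm
    induction m with
    | zero =>
      have h := rel_EF χ i i
      rw [if_pos rfl] at h
      show uE χ i * uF χ i - uF χ i * uE χ i = _
      rw [h]
      simp
    | succ m ihm =>
      have hC : recE (χ (eps p) (eps i)) (χ (eps p) (eps p)) (uE χ p) (uE χ i) (m) * recE (χ (eps i) (eps p)) (χ (eps p) (eps p)) (uF χ p) (uF χ i) (0) - recE (χ (eps i) (eps p)) (χ (eps p) (eps p)) (uF χ p) (uF χ i) (0) * recE (χ (eps p) (eps i)) (χ (eps p) (eps p)) (uE χ p) (uE χ i) (m)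
          = (((χ (eps i) (eps p)) ^ m)⁻¹ * ∏ s ∈ Finset.range m, (1 - (χ (eps p) (eps p)) ^ s * (χ (eps p) (eps i)) * (χ (eps i) (eps p)))) •
              (uK χ i * uE χ p ^ m)
            - ((((χ (eps i) (eps p)) ^ m)⁻¹ * ∏ s ∈ Finset.range m, (1 - (χ (eps p) (eps p)) ^ s * (χ (eps p) (eps i)) * (χ (eps i) (eps p)))) *
                (if m = 0 then (1:𝕜) else 0)) • (uL χ i * uE χ p ^ m) := by
        rw [ihm]
        by_cases hm0 : m = 0
        · subst hm0; simp
        · rw [if_neg hm0, if_neg hm0]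
          simp [sub_mul, mul_assoc]
      have hFiE : uE χ p * uF χ i = uF χ i * uE χ p := by
        have h := rel_EF χ p i
        rw [if_neg (Ne.symm hip)] at h
        exact sub_eq_zero.mp h
      have hstep := base_step (q := (χ (eps p) (eps p))) (a := (χ (eps p) (eps i))) (b := (χ (eps i) (eps p))) hC
        (rel_EK hχ i p) (rel_EL hχ i p)
        (show uE χ p * recE (χ (eps i) (eps p)) (χ (eps p) (eps p)) (uF χ p) (uF χ i) (0) = recE (χ (eps i) (eps p)) (χ (eps p) (eps p)) (uF χ p) (uF χ i) (0) * uE χ p from hFiE)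
        (rfl) ?hs2
      case hs2 =>
        by_cases hm0 : m = 0
        · subst hm0; simp
        · simp [hm0]
      calc recE (χ (eps p) (eps i)) (χ (eps p) (eps p)) (uE χ p) (uE χ i) (m+1) * recE (χ (eps i) (eps p)) (χ (eps p) (eps p)) (uF χ p) (uF χ i) (0) - recE (χ (eps i) (eps p)) (χ (eps p) (eps p)) (uF χ p) (uF χ i) (0) * recE (χ (eps p) (eps i)) (χ (eps p) (eps p)) (uE χ p) (uE χ i) (m+1)
          = (uE χ p * recE (χ (eps p) (eps i)) (χ (eps p) (eps p)) (uE χ p) (uE χ i) (m) - ((χ (eps p) (eps i)) * (χ (eps p) (eps p)) ^ m) • (recE (χ (eps p) (eps i)) (χ (eps p) (eps p)) (uE χ p) (uE χ i) (m) * uE χ p)) * recE (χ (eps i) (eps p)) (χ (eps p) (eps p)) (uF χ p) (uF χ i) (0)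
            - recE (χ (eps i) (eps p)) (χ (eps p) (eps p)) (uF χ p) (uF χ i) (0) * (uE χ p * recE (χ (eps p) (eps i)) (χ (eps p) (eps p)) (uE χ p) (uE χ i) (m) - ((χ (eps p) (eps i)) * (χ (eps p) (eps p)) ^ m) • (recE (χ (eps p) (eps i)) (χ (eps p) (eps p)) (uE χ p) (uE χ i) (m) * uE χ p)) := rfl
        _ = _ := hstep
        _ = _ := ?_
      rw [Finset.prod_range_succ]
      simp only [pow_zero, one_mul, Nat.sub_zero, Nat.zero_mul, inv_one,
        Finset.range_zero, Finset.prod_empty, mul_one, if_neg (Nat.succ_ne_zero m), sub_zero]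
      match_scalars
      field_simp
      ring
  | succ n IH =>
    intro m hm
    obtain ⟨k, rfl⟩ : ∃ k, m = n + k + 1 := ⟨m - (n+1), by omega⟩
    have hIf : (if n+k+1 = n+1 then uL χ p ^ (n+1) * uL χ i else 0)
        = (if k = 0 then (1:𝕜) else 0) • (uL χ p ^ (n+1) * uL χ i) := by
      by_cases hk : k = 0
      · subst hk; simp
      · rw [if_neg (by omega), if_neg hk, zero_smul]
    have hC : recE (χ (eps p) (eps i)) (χ (eps p) (eps p)) (uE χ p) (uE χ i) (n+k+1) * recE (χ (eps i) (eps p)) (χ (eps p) (eps p)) (uF χ p) (uF χ i) (n) - recE (χ (eps i) (eps p)) (χ (eps p) (eps p)) (uF χ p) (uF χ i) (n) * recE (χ (eps p) (eps i)) (χ (eps p) (eps p)) (uE χ p) (uE χ i) (n+k+1)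
        = ((-1 : 𝕜) ^ n * ((χ (eps i) (eps p)) ^ (k+1))⁻¹ * ((χ (eps p) (eps p)) ^ (n * (k+1)))⁻¹ *
            (∏ s ∈ Finset.range n, qNat (χ (eps p) (eps p)) (n+k+1 - s)) *
            ∏ s ∈ Finset.range (n+k+1), (1 - (χ (eps p) (eps p)) ^ s * (χ (eps p) (eps i)) * (χ (eps i) (eps p)))) •
          (uK χ p ^ n * (uK χ i * uE χ p ^ (k+1))) := by
      have h1 := IH (n+k+1) (by omega)
      rw [show n+k+1-n = k+1 from by omega, if_neg (by omega), sub_zero,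
        mul_assoc (uK χ p ^ n) (uK χ i)] at h1
      exact h1
    have hC' : recE (χ (eps p) (eps i)) (χ (eps p) (eps p)) (uE χ p) (uE χ i) (n+k) * recE (χ (eps i) (eps p)) (χ (eps p) (eps p)) (uF χ p) (uF χ i) (n) - recE (χ (eps i) (eps p)) (χ (eps p) (eps p)) (uF χ p) (uF χ i) (n) * recE (χ (eps p) (eps i)) (χ (eps p) (eps p)) (uE χ p) (uE χ i) (n+k)
        = ((-1 : 𝕜) ^ n * ((χ (eps i) (eps p)) ^ k)⁻¹ * ((χ (eps p) (eps p)) ^ (n * k))⁻¹ *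
            (∏ s ∈ Finset.range n, qNat (χ (eps p) (eps p)) (n+k - s)) *
            ∏ s ∈ Finset.range (n+k), (1 - (χ (eps p) (eps p)) ^ s * (χ (eps p) (eps i)) * (χ (eps i) (eps p)))) •
              (uK χ p ^ n * (uK χ i * uE χ p ^ k))
          - (((-1 : 𝕜) ^ n * ((χ (eps i) (eps p)) ^ k)⁻¹ * ((χ (eps p) (eps p)) ^ (n * k))⁻¹ *
            (∏ s ∈ Finset.range n, qNat (χ (eps p) (eps p)) (n+k - s)) *
            ∏ s ∈ Finset.range (n+k), (1 - (χ (eps p) (eps p)) ^ s * (χ (eps p) (eps i)) * (χ (eps i) (eps p)))) *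
              (if k = 0 then (1:𝕜) else 0)) • (uL χ p ^ n * (uL χ i * uE χ p ^ k)) := by
      have h2 := IH (n+k) (by omega)
      rw [show n+k-n = k from by omega] at h2
      have hIf2 : (if n+k = n then uL χ p ^ n * uL χ i else 0)
          = (if k = 0 then (1:𝕜) else 0) • (uL χ p ^ n * uL χ i) := by
        by_cases hk : k = 0
        · subst hk; simp
        · rw [if_neg (by omega), if_neg hk, zero_smul]
      rw [hIf2] at h2
      rw [h2]
      simp only [sub_mul, smul_mul_assoc, smul_sub, smul_smul, mul_assoc]
    have hA := lemA (α := (χ (eps p) (eps i))) (β := (χ (eps p) (eps p))) (lam := ((χ (eps i) (eps p)))⁻¹)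
      hq hXF hYF (rel_KE χ p p) (rel_KE χ p i) (rel_LE χ p p) (rel_LE χ p i) (n+k)
    have hD := lemD hq hXF (rel_KE χ p p) (rel_LE χ p p) k
    have hvw : ((χ (eps p) (eps p)) ^ k)⁻¹ * (χ (eps p) (eps p)) ^ k = 1 := inv_mul_cancel₀ (pow_ne_zero _ hq)
    have hFKn : uF χ p * uK χ p ^ n = ((χ (eps p) (eps p)) ^ n) • (uK χ p ^ n * uF χ p) :=
      comm_pow (rel_FK hχ p p) n
    have hEkK : uE χ p ^ k * uK χ p = (((χ (eps p) (eps p)) ^ k))⁻¹ • (uK χ p * uE χ p ^ k) :=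
      comm_swap (pow_ne_zero _ hq) (comm_pow (rel_KE χ p p) k)
    have hEkL : uE χ p ^ k * uL χ p = ((χ (eps p) (eps p)) ^ k) • (uL χ p * uE χ p ^ k) := by
      simpa [inv_pow] using
        comm_swap (pow_ne_zero k (inv_ne_zero hq)) (comm_pow (rel_LE χ p p) k)
    have hLS : uL χ p * recE (χ (eps i) (eps p)) (χ (eps p) (eps p)) (uF χ p) (uF χ i) (n) = ((χ (eps i) (eps p)) * (χ (eps p) (eps p)) ^ n) • (recE (χ (eps i) (eps p)) (χ (eps p) (eps p)) (uF χ p) (uF χ i) (n) * uL χ p) :=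
      comm_recE (α := (χ (eps i) (eps p))) (β := (χ (eps p) (eps p))) (rel_LF χ p p) (rel_LF χ p i) n
    have hs1 : ((-1 : 𝕜) ^ (n+1) * ((χ (eps i) (eps p)) ^ k)⁻¹ * ((χ (eps p) (eps p)) ^ ((n+1) * k))⁻¹ *
          (∏ s ∈ Finset.range (n+1), qNat (χ (eps p) (eps p)) (n+k+1 - s)) *
          ∏ s ∈ Finset.range (n+k+1), (1 - (χ (eps p) (eps p)) ^ s * (χ (eps p) (eps i)) * (χ (eps i) (eps p))))
        = -(((-1 : 𝕜) ^ n * ((χ (eps i) (eps p)) ^ (k+1))⁻¹ * ((χ (eps p) (eps p)) ^ (n * (k+1)))⁻¹ *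
            (∏ s ∈ Finset.range n, qNat (χ (eps p) (eps p)) (n+k+1 - s)) *
            ∏ s ∈ Finset.range (n+k+1), (1 - (χ (eps p) (eps p)) ^ s * (χ (eps p) (eps i)) * (χ (eps i) (eps p)))) *
          (χ (eps i) (eps p)) * (χ (eps p) (eps p)) ^ n * qNat (χ (eps p) (eps p)) (k+1) * ((χ (eps p) (eps p)) ^ k)⁻¹) := by
      rw [Finset.prod_range_succ (fun s => qNat (χ (eps p) (eps p)) (n+k+1 - s)) n,
        show n+k+1-n = k+1 from by omega]
      rw [show (n+1)*k = n*k+k from by ring, show n*(k+1) = n*k+n from by ring]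
      rw [pow_add, pow_add, pow_succ]
      field_simp
      ring
    have hs2 : ((-1 : 𝕜) ^ n * ((χ (eps i) (eps p)) ^ (k+1))⁻¹ * ((χ (eps p) (eps p)) ^ (n * (k+1)))⁻¹ *
          (∏ s ∈ Finset.range n, qNat (χ (eps p) (eps p)) (n+k+1 - s)) *
          ∏ s ∈ Finset.range (n+k+1), (1 - (χ (eps p) (eps p)) ^ s * (χ (eps p) (eps i)) * (χ (eps i) (eps p)))) *
            (χ (eps p) (eps p)) ^ n * (χ (eps i) (eps p)) * qNat (χ (eps p) (eps p)) (k+1)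
        + ((χ (eps p) (eps i)) * qNat (χ (eps p) (eps p)) (n+k+1) - ((χ (eps i) (eps p)))⁻¹ * qNat ((χ (eps p) (eps p)))⁻¹ (n+k+1)) *
            (χ (eps i) (eps p)) * (χ (eps p) (eps p)) ^ n *
            ((-1 : 𝕜) ^ n * ((χ (eps i) (eps p)) ^ k)⁻¹ * ((χ (eps p) (eps p)) ^ (n * k))⁻¹ *
              (∏ s ∈ Finset.range n, qNat (χ (eps p) (eps p)) (n+k - s)) *
              ∏ s ∈ Finset.range (n+k), (1 - (χ (eps p) (eps p)) ^ s * (χ (eps p) (eps i)) * (χ (eps i) (eps p)))) * (χ (eps p) (eps p)) ^ k = 0 := by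
      have hP := prod_qNat (χ (eps p) (eps p)) k n
      rw [qNat_inv (χ (eps p) (eps p)) hq (n+k)]
      rw [Finset.prod_range_succ (fun s => (1 - (χ (eps p) (eps p)) ^ s * (χ (eps p) (eps i)) * (χ (eps i) (eps p)))) (n+k)]
      rw [show n*(k+1) = n*k+n from by ring, pow_add, pow_add]
      have hPi1 : ∏ x ∈ Finset.range (n+k), (1 - χ (eps i) (eps p) * χ (eps p) (eps p) ^ x * χ (eps p) (eps i))
          = ∏ s ∈ Finset.range (n+k), (1 - (χ (eps p) (eps p)) ^ s * (χ (eps p) (eps i)) * (χ (eps i) (eps p))) :=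
        Finset.prod_congr rfl fun _ _ => by ring
      have hPi2 : ∏ x ∈ Finset.range (n+k), (1 - χ (eps i) (eps p) * χ (eps p) (eps i) * χ (eps p) (eps p) ^ x)
          = ∏ s ∈ Finset.range (n+k), (1 - (χ (eps p) (eps p)) ^ s * (χ (eps p) (eps i)) * (χ (eps i) (eps p))) :=
        Finset.prod_congr rfl fun _ _ => by ring
      field_simp
      rw [hPi1, hPi2]
      linear_combination ((-1 : 𝕜) ^ n *
        (∏ s ∈ Finset.range (n+k), (1 - (χ (eps p) (eps p)) ^ s * (χ (eps p) (eps i)) * (χ (eps i) (eps p)))) *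
        ((χ (eps p) (eps p))^n*(χ (eps p) (eps p))^k
          - (χ (eps p) (eps p))^(n*2)*(χ (eps p) (eps p))^(k*2)*(χ (eps i) (eps p))*(χ (eps p) (eps i)))) * hP
    have hs3 : ((-1 : 𝕜) ^ (n+1) * ((χ (eps i) (eps p)) ^ k)⁻¹ * ((χ (eps p) (eps p)) ^ ((n+1) * k))⁻¹ *
          (∏ s ∈ Finset.range (n+1), qNat (χ (eps p) (eps p)) (n+k+1 - s)) *
          ∏ s ∈ Finset.range (n+k+1), (1 - (χ (eps p) (eps p)) ^ s * (χ (eps p) (eps i)) * (χ (eps i) (eps p)))) *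
            (if k = 0 then (1:𝕜) else 0)
        = ((χ (eps p) (eps i)) * qNat (χ (eps p) (eps p)) (n+k+1) - ((χ (eps i) (eps p)))⁻¹ * qNat ((χ (eps p) (eps p)))⁻¹ (n+k+1)) *
            (χ (eps i) (eps p)) * (χ (eps p) (eps p)) ^ n *
            (((-1 : 𝕜) ^ n * ((χ (eps i) (eps p)) ^ k)⁻¹ * ((χ (eps p) (eps p)) ^ (n * k))⁻¹ *
              (∏ s ∈ Finset.range n, qNat (χ (eps p) (eps p)) (n+k - s)) *
              ∏ s ∈ Finset.range (n+k), (1 - (χ (eps p) (eps p)) ^ s * (χ (eps p) (eps i)) * (χ (eps i) (eps p)))) *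
              (if k = 0 then (1:𝕜) else 0)) * (χ (eps p) (eps p)) ^ k := by
      by_cases hk : k = 0
      · rw [if_pos hk]
        subst hk
        linear_combination hs1 - hs2
      · rw [if_neg hk]
        simp
    rw [show n+k+1-(n+1) = k from by omega, hIf]
    rw [show recE (χ (eps i) (eps p)) (χ (eps p) (eps p)) (uF χ p) (uF χ i) (n+1) = uF χ p * recE (χ (eps i) (eps p)) (χ (eps p) (eps p)) (uF χ p) (uF χ i) (n)
        - ((χ (eps i) (eps p)) * (χ (eps p) (eps p)) ^ n) • (recE (χ (eps i) (eps p)) (χ (eps p) (eps p)) (uF χ p) (uF χ i) (n) * uF χ p) from rfl]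
    have hrhs : ∀ (sc : 𝕜),
        sc • ((uK χ p ^ (n+1) * uK χ i
            - (if k = 0 then (1:𝕜) else 0) • (uL χ p ^ (n+1) * uL χ i)) * uE χ p ^ k)
          = sc • (uK χ p ^ (n+1) * (uK χ i * uE χ p ^ k))
            - (sc * (if k = 0 then (1:𝕜) else 0)) • (uL χ p ^ (n+1) * (uL χ i * uE χ p ^ k)) := by
      intro sc
      simp only [sub_mul, smul_mul_assoc, smul_sub, smul_smul, mul_assoc]
    rw [hrhs]
    exact succ_step hvw hC hC' hA hFKn (rel_FK hχ i p) hEkK hEkL hLS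
      (rel_KiK χ i p) (rel_KiL χ i p) (rel_LiL χ i p) hD hs1 hs2 hs3

end Main

/-- Lemma (le:E+F+1): the commutator `[E^+_{i,m}, F^+_{i,n}]` in `𝒰(χ)`
for `m ≥ n`. -/
theorem commutator_Eplus_Fplus (hχ : IsBichar χ) (p i : I) (hip : i ≠ p)
    (m n : ℕ) (hmn : n ≤ m) :
    recE (χ (eps p) (eps i)) (χ (eps p) (eps p)) (uE χ p) (uE χ i) m *
        recE (χ (eps i) (eps p)) (χ (eps p) (eps p)) (uF χ p) (uF χ i) n -
      recE (χ (eps i) (eps p)) (χ (eps p) (eps p)) (uF χ p) (uF χ i) n *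
        recE (χ (eps p) (eps i)) (χ (eps p) (eps p)) (uE χ p) (uE χ i) m =
    ((-1 : 𝕜) ^ n * χ (eps i) (eps p) ^ ((n : ℤ) - (m : ℤ)) *
        χ (eps p) (eps p) ^ ((n : ℤ) * ((n : ℤ) - (m : ℤ))) *
        (∏ s ∈ Finset.range n, qNat (χ (eps p) (eps p)) (m - s)) *
        ∏ s ∈ Finset.range m,
          (1 - χ (eps p) (eps p) ^ s * χ (eps p) (eps i) * χ (eps i) (eps p))) •
      ((uK χ p ^ n * uK χ i - if m = n then uL χ p ^ n * uL χ i else 0) *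
        uE χ p ^ (m - n)) := by
  have h := aux_commutator hχ p i hip n m hmn
  have e1 : χ (eps i) (eps p) ^ ((n : ℤ) - (m : ℤ)) = (χ (eps i) (eps p) ^ (m - n))⁻¹ := by
    have h0 : (n : ℤ) - (m : ℤ) = -(((m - n : ℕ) : ℤ)) := by omega
    rw [h0, zpow_neg, zpow_natCast]
  have e2 : χ (eps p) (eps p) ^ ((n : ℤ) * ((n : ℤ) - (m : ℤ)))
      = (χ (eps p) (eps p) ^ (n * (m - n)))⁻¹ := by
    have h1 : ((n * (m - n) : ℕ) : ℤ) = (n : ℤ) * ((m : ℤ) - (n : ℤ)) := by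
      push_cast [Nat.cast_sub hmn]
      ring
    rw [show (n : ℤ) * ((n : ℤ) - (m : ℤ)) = -((n : ℤ) * ((m : ℤ) - (n : ℤ))) from by ring,
      ← h1, zpow_neg, zpow_natCast]
  rw [e1, e2]
  exact h
end Steps
end
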